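/- Let M be a rank-r paving matroid on a finite ground set E with n elements, having no coloops. If 2r ≤ n, then M contains two disjoint bases. -/

import Mathlib

open Matroid Set

variable {α : Type*}

/-- The rank of a set `X` in a matroid `M`:
the maximum size of an independent subset of `X`. -/
noncomputable def Matroid.rankSet (M : Matroid α) (X : Set α) : ℕ :=
  sSup {n | ∃ I ⊆ X, M.Indep I ∧ I.ncard = n}

/-- The Tutte polynomial of a matroid `M` on a finite type, evaluated at `(x, y) : ℝ × ℝ`:
`T_M(x,y) = Σ_{A ⊆ E} (x−1)^{r(E)−r(A)} · (y−1)^{|A|−r(A)}`. -/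
noncomputable def Matroid.tutte [Fintype α] (M : Matroid α) (x y : ℝ) : ℝ :=
  ∑ A ∈ M.E.toFinite.toFinset.powerset,
    (x - 1) ^ (M.rankSet M.E - M.rankSet ↑A) * (y - 1) ^ (A.card - M.rankSet ↑A)

/-- A circuit of a matroid: a minimal dependent set. -/
def Matroid.IsCircuitSet (M : Matroid α) (C : Set α) : Prop :=
  M.Dep C ∧ ∀ D, M.Dep D → D ⊆ C → D = C

/-- A matroid is paving if every circuit has size at least the rank of the matroid. -/
def Matroid.Paving (M : Matroid α) : Prop :=
  ∀ C, M.IsCircuitSet C → M.rankSet M.E ≤ C.ncard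

/-- A matroid is coloopless if no element of the ground set lies in every basis. -/
def Matroid.Coloopless (M : Matroid α) : Prop :=
  ∀ e ∈ M.E, ¬ (∀ B, M.IsBase B → e ∈ B)

section Aux

variable [Fintype α] {M : Matroid α} {B I X : Set α}

lemma base_ncard_eq_rankSet (hB : M.IsBase B) : B.ncard = M.rankSet M.E := by
  have hset : {n | ∃ I ⊆ M.E, M.Indep I ∧ I.ncard = n} = Set.Iic B.ncard := by
    ext m
    constructor
    · rintro ⟨I, hIE, hI, rfl⟩
      obtain ⟨B', hB', hIB'⟩ := hI.exists_isBase_superset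
      exact (ncard_le_ncard hIB' (Set.toFinite _)).trans (hB'.ncard_eq_ncard_of_isBase hB).le
    · intro hm
      obtain ⟨t, hts, htc⟩ := Set.exists_subset_card_eq hm
      exact ⟨t, hts.trans hB.subset_ground, hB.indep.subset hts, htc⟩
  rw [Matroid.rankSet, hset, csSup_Iic]

lemma indep_of_ncard_lt (hpav : M.Paving) (hX : X ⊆ M.E)
    (hlt : X.ncard < M.rankSet M.E) : M.Indep X := by
  classical
  by_contra hdep
  have hXdep : M.Dep X := ⟨hdep, hX⟩
  have hP : ∃ m, ∃ C ⊆ X, M.Dep C ∧ C.ncard = m := ⟨X.ncard, X, subset_rfl, hXdep, rfl⟩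
  obtain ⟨C, hCX, hCdep, hCm⟩ := Nat.find_spec hP
  have hcirc : M.IsCircuitSet C := by
    refine ⟨hCdep, fun D hD hDC => ?_⟩
    have hle : Nat.find hP ≤ D.ncard := Nat.find_min' hP ⟨D, hDC.trans hCX, hD, rfl⟩
    exact eq_of_subset_of_ncard_le hDC (by omega) (Set.toFinite _)
  have h1 := hpav C hcirc
  have h2 : C.ncard ≤ X.ncard := ncard_le_ncard hCX (Set.toFinite _)
  omega

lemma base_of_indep_ncard (hI : M.Indep I) (hc : I.ncard = M.rankSet M.E) : M.IsBase I := by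
  obtain ⟨B, hB, hIB⟩ := hI.exists_isBase_superset
  have hIeq : I = B :=
    eq_of_subset_of_ncard_le hIB (by rw [base_ncard_eq_rankSet hB, ← hc]) (Set.toFinite _)
  exact hIeq ▸ hB

end Aux

/-- If `M` is a rank-`r` coloopless paving matroid on a finite ground set with `n` elements
and `2r ≤ n`, then `M` contains two disjoint bases. -/
theorem paving_two_disjoint_bases [Fintype α] (M : Matroid α) (r n : ℕ)
    (hr : M.rankSet M.E = r) (hn : M.E.ncard = n)
    (hpav : M.Paving) (hcl : M.Coloopless) (h : 2 * r ≤ n) :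
    ∃ B₁ B₂, M.IsBase B₁ ∧ M.IsBase B₂ ∧ B₁ ∩ B₂ = ∅ := by
  classical
  have hBr : ∀ B, M.IsBase B → B.ncard = r := fun B hB => (base_ncard_eq_rankSet hB).trans hr
  have hsmall : ∀ X, X ⊆ M.E → X.ncard < r → M.Indep X := fun X hX hlt =>
    indep_of_ncard_lt hpav hX (by rw [hr]; exact hlt)
  have hbase : ∀ I, M.Indep I → I.ncard = r → M.IsBase I := fun I hI hc =>
    base_of_indep_ncard hI (by rw [hr]; exact hc)
  obtain ⟨B, hB⟩ := M.exists_isBase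
  have hBE := hB.subset_ground
  have hBcard : B.ncard = r := hBr B hB
  rcases Nat.eq_zero_or_pos r with hr0 | hr1
  · have hBe : B = ∅ := (ncard_eq_zero (Set.toFinite _)).mp (by omega)
    exact ⟨B, B, hB, hB, by simp [hBe]⟩
  have hEBcard : (M.E \ B).ncard = n - r := by
    rw [ncard_diff hBE, hn, hBcard]
  obtain ⟨I, hIEB, hIcard⟩ : ∃ I ⊆ M.E \ B, I.ncard = r - 1 :=
    Set.exists_subset_card_eq (by omega)
  have hIE : I ⊆ M.E := hIEB.trans diff_subset
  have hIind : M.Indep I := hsmall I hIE (by omega)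
  have hIB : ∀ x ∈ I, x ∉ B := fun x hx => (hIEB hx).2
  by_cases hJ : ∃ J ⊆ M.E \ B, M.Indep J ∧ J.ncard = r
  · obtain ⟨J, hJEB, hJind, hJcard⟩ := hJ
    refine ⟨B, J, hB, hbase J hJind hJcard, ?_⟩
    rw [eq_empty_iff_forall_notMem]
    rintro x ⟨hx1, hx2⟩
    exact (hJEB hx2).2 hx1
  · push_neg at hJ
    have hdepins : ∀ f ∈ (M.E \ B) \ I, M.Dep (insert f I) := by
      rintro f ⟨hfEB, hfI⟩
      have hcard : (insert f I).ncard = r := by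
        rw [ncard_insert_of_notMem hfI]; omega
      have hsub : insert f I ⊆ M.E \ B := insert_subset hfEB hIEB
      exact ⟨fun hind => hJ _ hsub hind hcard, hsub.trans diff_subset⟩
    have hclI : M.E \ B ⊆ M.closure I := by
      intro f hf
      by_cases hfI : f ∈ I
      · exact M.subset_closure I hIE hfI
      · exact (hIind.mem_closure_iff_of_notMem hfI).mpr (hdepins f ⟨hf, hfI⟩)
    obtain ⟨e, heB, hecl⟩ : ∃ e ∈ B, e ∉ M.closure I := by
      by_contra hcon
      push_neg at hcon
      have hEcl : M.E ⊆ M.closure I := by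
        intro x hx
        by_cases hxB : x ∈ B
        · exact hcon x hxB
        · exact hclI ⟨hx, hxB⟩
      have hIbase : M.IsBase I := hIind.isBase_of_ground_subset_closure hEcl
      have := hBr I hIbase
      omega
    have heI : e ∉ I := fun hh => hIB e hh heB
    have heE : e ∈ M.E := hBE heB
    have hIe : M.Indep (insert e I) :=
      (hIind.insert_indep_iff_of_notMem heI).mpr ⟨heE, hecl⟩
    have hIebase : M.IsBase (insert e I) :=
      hbase _ hIe (by rw [ncard_insert_of_notMem heI]; omega)
    obtain ⟨B', hB', heB'⟩ : ∃ B', M.IsBase B' ∧ e ∉ B' := by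
      have hne := hcl e heE
      push_neg at hne
      exact hne
    have hclEe : M.closure (M.E \ {e}) = M.E :=
      hB'.closure_of_superset (subset_diff_singleton hB'.subset_ground heB')
    have hBe_ind : M.Indep (B \ {e}) := hB.indep.diff {e}
    have hBecard : (B \ {e}).ncard = r - 1 := by
      rw [ncard_diff_singleton_of_mem heB]; omega
    by_cases hf : ∃ f ∈ (M.E \ B) \ I, f ∉ M.closure (B \ {e})
    · obtain ⟨f, hfmem, hfcl⟩ := hf
      have hfB : f ∉ B := hfmem.1.2
      have hfI : f ∉ I := hfmem.2
      have hfnotBe : f ∉ B \ {e} := fun hh => hfB hh.1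
      have hfind : M.Indep (insert f (B \ {e})) :=
        (hBe_ind.insert_indep_iff_of_notMem hfnotBe).mpr ⟨hfmem.1.1, hfcl⟩
      have hfbase : M.IsBase (insert f (B \ {e})) :=
        hbase _ hfind (by rw [ncard_insert_of_notMem hfnotBe]; omega)
      refine ⟨insert e I, insert f (B \ {e}), hIebase, hfbase, ?_⟩
      rw [eq_empty_iff_forall_notMem]
      rintro x ⟨hx1, hx2⟩
      rcases hx1 with rfl | hxI
      · rcases hx2 with rfl | hxBe
        · exact hfB heB
        · exact hxBe.2 rfl
      · rcases hx2 with rfl | hxBe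
        · exact hfI hxI
        · exact hIB x hxI hxBe.1
    · push_neg at hf
      obtain ⟨g, hgI, hgcl⟩ : ∃ g ∈ I, g ∉ M.closure (B \ {e}) := by
        by_contra hcon
        push_neg at hcon
        have hsub : M.E \ {e} ⊆ M.closure (B \ {e}) := by
          rintro x ⟨hxE, hxe⟩
          by_cases hxB : x ∈ B
          · exact M.subset_closure (B \ {e}) (diff_subset.trans hBE) ⟨hxB, hxe⟩
          · by_cases hxI : x ∈ I
            · exact hcon x hxI
            · exact hf x ⟨⟨hxE, hxB⟩, hxI⟩
        have hEsub : M.E ⊆ M.closure (B \ {e}) := by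
          rw [← hclEe]
          exact closure_subset_closure_of_subset_closure hsub
        exact hB.indep.notMem_closure_diff_of_mem heB (hEsub heE)
      have hgEB : g ∈ M.E \ B := hIEB hgI
      have hgB : g ∉ B := hgEB.2
      have hr2 : 2 ≤ r := by
        have hpos : 0 < I.ncard := (ncard_pos (Set.toFinite _)).mpr ⟨g, hgI⟩
        omega
      have hgnotBe : g ∉ B \ {e} := fun hh => hgB hh.1
      have hB1ind : M.Indep (insert g (B \ {e})) :=
        (hBe_ind.insert_indep_iff_of_notMem hgnotBe).mpr ⟨hgEB.1, hgcl⟩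
      have hB1base : M.IsBase (insert g (B \ {e})) :=
        hbase _ hB1ind (by rw [ncard_insert_of_notMem hgnotBe]; omega)
      obtain ⟨f₀, hf₀EB, hf₀I⟩ : ∃ f₀, f₀ ∈ M.E \ B ∧ f₀ ∉ I :=
        exists_mem_notMem_of_ncard_lt_ncard (by omega) (Set.toFinite _)
      have hf₀g : f₀ ≠ g := fun hh => hf₀I (hh ▸ hgI)
      have hf₀B : f₀ ∉ B := hf₀EB.2
      have hf₀Ig : f₀ ∉ I \ {g} := fun hh => hf₀I hh.1
      have hJsub : insert f₀ (I \ {g}) ⊆ M.E :=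
        insert_subset hf₀EB.1 (diff_subset.trans hIE)
      have hJcard : (insert f₀ (I \ {g})).ncard = r - 1 := by
        rw [ncard_insert_of_notMem hf₀Ig, ncard_diff_singleton_of_mem hgI]; omega
      have hJind : M.Indep (insert f₀ (I \ {g})) := hsmall _ hJsub (by omega)
      have hgJ : g ∉ insert f₀ (I \ {g}) := by
        rintro (rfl | hh)
        · exact hf₀g rfl
        · exact hh.2 rfl
      have hinsgJ : insert g (insert f₀ (I \ {g})) = insert f₀ I := by
        rw [Set.insert_comm, Set.insert_diff_singleton, insert_eq_of_mem hgI]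
      have hgclJ : g ∈ M.closure (insert f₀ (I \ {g})) :=
        (hJind.mem_closure_iff_of_notMem hgJ).mpr
          (by rw [hinsgJ]; exact hdepins f₀ ⟨hf₀EB, hf₀I⟩)
      have hclJI : M.closure (insert f₀ (I \ {g})) = M.closure I := by
        apply subset_antisymm
        · apply closure_subset_closure_of_subset_closure
          rintro x (rfl | hx)
          · exact hclI hf₀EB
          · exact M.subset_closure I hIE hx.1
        · apply closure_subset_closure_of_subset_closure
          intro x hxI
          by_cases hxg : x = g
          · exact hxg ▸ hgclJ
          · exact M.subset_closure _ hJsub (Or.inr ⟨hxI, hxg⟩)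
      have heJ : e ∉ insert f₀ (I \ {g}) := by
        rintro (rfl | hh)
        · exact hf₀B heB
        · exact heI hh.1
      have heclJ : e ∉ M.closure (insert f₀ (I \ {g})) := by
        rw [hclJI]; exact hecl
      have hB2ind : M.Indep (insert e (insert f₀ (I \ {g}))) :=
        (hJind.insert_indep_iff_of_notMem heJ).mpr ⟨heE, heclJ⟩
      have hB2base : M.IsBase (insert e (insert f₀ (I \ {g}))) :=
        hbase _ hB2ind (by rw [ncard_insert_of_notMem heJ, hJcard]; omega)
      refine ⟨insert g (B \ {e}), insert e (insert f₀ (I \ {g})), hB1base, hB2base, ?_⟩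
      rw [eq_empty_iff_forall_notMem]
      rintro x ⟨hx1, hx2⟩
      rcases hx1 with rfl | hxBe
      · rcases hx2 with rfl | rfl | hh
        · exact hgB heB
        · exact hf₀g rfl
        · exact hh.2 rfl
      · rcases hx2 with rfl | rfl | hh
        · exact hxBe.2 rfl
        · exact hf₀B hxBe.1
        · exact hIB x hh.1 hxBe.1
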